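/- Let √n < r ≤ n be an integer and set M = ⌊√n⌋. Then there exists a nonzero function f : Q → ℝ supported in B_r(0) = {x : wt(x) ≤ r} such that ∑_{x∈Q}(∑_{y: d(x,y)=1} f(y))·f(x) ≥ L·∑_{x∈Q} f(x)², where L = (1/M)·∑_{k=r−M+2}^{r−1} ( k·√(s_k/s_{k−1}) + n(q̂_a−1) − k − (k+1)·s_{k+1}/s_k + (k+1)·√(s_{k+1}/s_k) ). Equivalently, the maximum eigenvalue λ_{B_r(0)} of the adjacency minor of the Hamming graph on B_r(0) is at least L. -/

import Mathlib

/-- The Hamming weight of `x ∈ Q = ∏ i, ℤ/q_iℤ`: the number of coordinates `i`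
with `x i ≠ 0`. -/
def mwt {n : ℕ} {q : Fin n → ℕ} (x : ∀ i, ZMod (q i)) : ℕ :=
  (Finset.univ.filter (fun i => x i ≠ 0)).card

/-- `sph q r` is `s_r`, the number of `x ∈ Q` with `wt(x) = r`. -/
noncomputable def sph {n : ℕ} (q : Fin n → ℕ) (r : ℕ) : ℕ :=
  Nat.card {x : ∀ i, ZMod (q i) // mwt x = r}

/-- The arithmetic mean `q̂_a = (1/n) ∑ q_i` of the alphabet sizes. -/
noncomputable def qa {n : ℕ} (q : Fin n → ℕ) : ℝ :=
  (∑ i : Fin n, (q i : ℝ)) / n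

/-- The adjacency operator of the Hamming graph on `Q = ∏ i, ℤ/q_iℤ`:
`(adjOp f) x = ∑_{y : d(x,y)=1} f y`. -/
noncomputable def adjOp {n : ℕ} {q : Fin n → ℕ} [∀ i, NeZero (q i)]
    (f : (∀ i, ZMod (q i)) → ℝ) (x : ∀ i, ZMod (q i)) : ℝ :=
  ∑ y ∈ Finset.univ.filter (fun y : ∀ i, ZMod (q i) => mwt (x - y) = 1), f y

open Finset Function

section aux
variable {n : ℕ} {q : Fin n → ℕ} [∀ i, NeZero (q i)]

lemma mwt_update_ne_ne {x : ∀ i, ZMod (q i)} {i : Fin n} {v : ZMod (q i)}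
    (hx : x i ≠ 0) (hv : v ≠ 0) : mwt (update x i v) = mwt x := by
  unfold mwt
  congr 1
  ext j
  by_cases h : j = i
  · subst h; simp [hx, hv]
  · simp [update_of_ne h]

lemma mwt_update_zero_ne {x : ∀ i, ZMod (q i)} {i : Fin n} {v : ZMod (q i)}
    (hx : x i = 0) (hv : v ≠ 0) : mwt (update x i v) = mwt x + 1 := by
  unfold mwt
  have h1 : Finset.univ.filter (fun j => update x i v j ≠ 0)
      = insert i (Finset.univ.filter (fun j => x j ≠ 0)) := by
    ext j
    by_cases h : j = i
    · subst h; simp [hv]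
    · simp [update_of_ne h, h]
  rw [h1, card_insert_of_notMem (by simp [hx])]

lemma mwt_update_zero {x : ∀ i, ZMod (q i)} {i : Fin n}
    (hx : x i ≠ 0) : mwt (update x i (0 : ZMod (q i))) + 1 = mwt x := by
  unfold mwt
  have h1 : Finset.univ.filter (fun j => update x i (0:ZMod (q i)) j ≠ 0)
      = (Finset.univ.filter (fun j => x j ≠ 0)).erase i := by
    ext j
    by_cases h : j = i
    · subst h; simp
    · simp [update_of_ne h, h]
  rw [h1, card_erase_add_one (by simp [hx])]

end aux

section aux2
set_option linter.unusedSectionVars false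
variable {n : ℕ} {q : Fin n → ℕ} [∀ i, NeZero (q i)]

lemma nbhd_eq_image (x : ∀ i, ZMod (q i)) :
    Finset.univ.filter (fun y : ∀ i, ZMod (q i) => mwt (x - y) = 1)
      = Finset.image (fun p : Σ i : Fin n, ZMod (q i) => update x p.1 p.2)
          (Finset.univ.filter (fun p : Σ i : Fin n, ZMod (q i) => p.2 ≠ x p.1)) := by
  ext y
  simp only [mem_filter, mem_univ, true_and, mem_image]
  constructor
  · intro hy
    have hc : (Finset.univ.filter (fun j => (x - y) j ≠ 0)).card = 1 := hy
    obtain ⟨i, hi⟩ := Finset.card_eq_one.mp hc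
    have hmem : ∀ j, j ∈ Finset.univ.filter (fun j => (x - y) j ≠ 0) ↔ j = i := by
      intro j; rw [hi]; simp
    refine ⟨⟨i, y i⟩, ?_, ?_⟩
    · have := (hmem i).mpr rfl
      simp only [mem_filter, mem_univ, true_and, Pi.sub_apply] at this
      intro h; exact this (sub_eq_zero.mpr h.symm)
    · funext j
      by_cases h : j = i
      · subst h; simp
      · rw [update_of_ne h]
        have : ¬ ((x - y) j ≠ 0) := by
          intro hne
          exact h ((hmem j).mp (by simpa using hne))
        have := not_not.mp this
        simp only [Pi.sub_apply] at this
        exact sub_eq_zero.mp this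
  · rintro ⟨⟨i, v⟩, hv, rfl⟩
    simp only [mem_filter, mem_univ, true_and] at hv
    show (Finset.univ.filter (fun j => (x - update x i v) j ≠ 0)).card = 1
    have : Finset.univ.filter (fun j => (x - update x i v) j ≠ 0) = {i} := by
      ext j
      by_cases h : j = i
      · subst h
        simp [sub_ne_zero.mpr (Ne.symm hv)]
      · simp [Pi.sub_apply, update_of_ne h, h]
    rw [this, card_singleton]

lemma nbhd_sum (x : ∀ i, ZMod (q i)) (F : (∀ i, ZMod (q i)) → ℝ) :
    ∑ y ∈ Finset.univ.filter (fun y : ∀ i, ZMod (q i) => mwt (x - y) = 1), F y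
      = ∑ i : Fin n, ∑ v ∈ Finset.univ.filter (fun v : ZMod (q i) => v ≠ x i),
          F (update x i v) := by
  rw [nbhd_eq_image, Finset.sum_image]
  · rw [show (Finset.univ.filter (fun p : Σ i : Fin n, ZMod (q i) => p.2 ≠ x p.1))
        = Finset.univ.sigma (fun i => Finset.univ.filter (fun v : ZMod (q i) => v ≠ x i)) from by
        ext ⟨i, v⟩; simp, Finset.sum_sigma]
  · rintro ⟨i, v⟩ hi ⟨j, w⟩ hj hupd
    simp only [mem_coe, mem_filter, mem_univ, true_and] at hi hj
    have hij : i = j := by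
      by_contra hne
      have := congrFun hupd j
      dsimp only at this
      rw [update_of_ne (Ne.symm hne), update_self] at this
      exact hj this.symm
    subst hij
    have := congrFun hupd i
    simp only [update_self] at this
    subst this
    rfl
end aux2


section aux3
set_option linter.unusedSectionVars false
variable {n : ℕ} {q : Fin n → ℕ} [∀ i, NeZero (q i)]

lemma sph_card (m : ℕ) :
    sph q m = (Finset.univ.filter (fun x : ∀ i, ZMod (q i) => mwt x = m)).card := by
  rw [sph, Nat.card_eq_fintype_card, Fintype.card_subtype]

lemma card_filter_ne (i : Fin n) (a : ZMod (q i)) :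
    (Finset.univ.filter (fun v : ZMod (q i) => v ≠ a)).card = q i - 1 := by
  rw [Finset.filter_ne', Finset.card_erase_of_mem (mem_univ a), Finset.card_univ, ZMod.card]

lemma inner_sum_zero (c : ℕ → ℝ) (x : ∀ i, ZMod (q i)) (i : Fin n) (hx : x i = 0) :
    ∑ v ∈ Finset.univ.filter (fun v : ZMod (q i) => v ≠ x i), c (mwt (update x i v))
      = ((q i : ℝ) - 1) * c (mwt x + 1) := by
  rw [Finset.sum_congr rfl (fun v hv => by
    rw [mwt_update_zero_ne hx (by simpa [hx] using (mem_filter.mp hv).2)]),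
    Finset.sum_const, card_filter_ne, nsmul_eq_mul]
  have h1 : 1 ≤ q i := Nat.one_le_iff_ne_zero.mpr (NeZero.ne (q i))
  push_cast [h1]
  ring

lemma inner_sum_ne (c : ℕ → ℝ) (x : ∀ i, ZMod (q i)) (i : Fin n) (hq : 2 ≤ q i)
    (hx : x i ≠ 0) :
    ∑ v ∈ Finset.univ.filter (fun v : ZMod (q i) => v ≠ x i), c (mwt (update x i v))
      = c (mwt x - 1) + ((q i : ℝ) - 2) * c (mwt x) := by
  have h0 : (0 : ZMod (q i)) ∈ Finset.univ.filter (fun v : ZMod (q i) => v ≠ x i) := by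
    simp [Ne.symm hx]
  rw [← Finset.sum_erase_add _ _ h0]
  have hupd : mwt (update x i (0 : ZMod (q i))) = mwt x - 1 := by
    have := mwt_update_zero (x := x) (i := i) hx
    omega
  rw [hupd]
  have herase : ∀ v ∈ (Finset.univ.filter (fun v : ZMod (q i) => v ≠ x i)).erase 0,
      c (mwt (update x i v)) = c (mwt x) := by
    intro v hv
    have h1 := Finset.mem_erase.mp hv
    rw [mwt_update_ne_ne hx h1.1]
  rw [Finset.sum_congr rfl herase, Finset.sum_const,
    Finset.card_erase_of_mem (by simpa using h0), card_filter_ne, nsmul_eq_mul]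
  have h2 : ((q i - 1 - 1 : ℕ) : ℝ) = (q i : ℝ) - 2 := by
    have : q i - 1 - 1 = q i - 2 := by omega
    rw [this]
    push_cast [hq]
    ring
  rw [h2]
  ring

end aux3

section aux4
set_option linter.unusedSectionVars false
variable {n : ℕ} {q : Fin n → ℕ} [∀ i, NeZero (q i)]

lemma gcount (m : ℕ) :
    ∑ x ∈ Finset.univ.filter (fun x : ∀ i, ZMod (q i) => mwt x = m),
      ∑ i ∈ Finset.univ.filter (fun i => x i = 0), ((q i : ℝ) - 1)
    = ((m : ℝ) + 1) * (sph q (m+1) : ℝ) := by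
  -- rewrite (q i - 1) as a sum of ones over nonzero values
  have hqi : ∀ i : Fin n, ((q i : ℝ) - 1)
      = ∑ _v ∈ Finset.univ.filter (fun v : ZMod (q i) => v ≠ 0), (1 : ℝ) := by
    intro i
    rw [Finset.sum_const, card_filter_ne, nsmul_eq_mul, mul_one]
    have h1 : 1 ≤ q i := Nat.one_le_iff_ne_zero.mpr (NeZero.ne (q i))
    push_cast [h1]; ring
  -- RHS as a double sum of ones
  have hrhs : ((m : ℝ) + 1) * (sph q (m+1) : ℝ)
      = ∑ z ∈ Finset.univ.filter (fun z : ∀ i, ZMod (q i) => mwt z = m + 1),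
          ∑ _i ∈ Finset.univ.filter (fun i => z i ≠ 0), (1 : ℝ) := by
    have step : ∀ z ∈ Finset.univ.filter (fun z : ∀ i, ZMod (q i) => mwt z = m + 1),
        ∑ _i ∈ Finset.univ.filter (fun i => z i ≠ 0), (1 : ℝ) = (m : ℝ) + 1 := by
      intro z hz
      rw [Finset.sum_const, nsmul_eq_mul, mul_one]
      have hmz : mwt z = m + 1 := (mem_filter.mp hz).2
      have : (Finset.univ.filter (fun i => z i ≠ 0)).card = m + 1 := hmz
      rw [this]; push_cast; ring
    rw [Finset.sum_congr rfl step, Finset.sum_const, sph_card, nsmul_eq_mul]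
    ring
  simp_rw [hqi]
  rw [hrhs, Finset.sum_sigma', Finset.sum_sigma', Finset.sum_sigma']
  refine Finset.sum_nbij'
    (fun p : Σ _p : (Σ _x : (∀ i, ZMod (q i)), Fin n), ZMod (q _p.2) =>
      (⟨update p.1.1 p.1.2 p.2, p.1.2⟩ : Σ _z : (∀ i, ZMod (q i)), Fin n))
    (fun p : Σ _z : (∀ i, ZMod (q i)), Fin n =>
      (⟨⟨update p.1 p.2 0, p.2⟩, p.1 p.2⟩ :
        Σ _p : (Σ _x : (∀ i, ZMod (q i)), Fin n), ZMod (q _p.2)))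
    ?_ ?_ ?_ ?_ (fun _ _ => rfl)
  · rintro ⟨⟨x, i⟩, v⟩ hp
    simp only [Finset.mem_sigma, mem_filter, mem_univ, true_and] at hp ⊢
    obtain ⟨⟨hxm, hxi⟩, hv⟩ := hp
    exact ⟨by rw [mwt_update_zero_ne hxi hv, hxm], by simp [hv]⟩
  · rintro ⟨z, i⟩ hp
    simp only [Finset.mem_sigma, mem_filter, mem_univ, true_and] at hp ⊢
    obtain ⟨hzm, hzi⟩ := hp
    refine ⟨⟨?_, by simp⟩, hzi⟩
    have := mwt_update_zero (x := z) (i := i) hzi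
    omega
  · rintro ⟨⟨x, i⟩, v⟩ hp
    simp only [Finset.mem_sigma, mem_filter, mem_univ, true_and] at hp
    obtain ⟨⟨hxm, hxi⟩, hv⟩ := hp
    simp only [update_idem, update_self, Sigma.mk.inj_iff, heq_eq_eq, and_true]
    funext j
    by_cases h : j = i
    · subst h; simp [hxi]
    · simp [update_of_ne h]
  · rintro ⟨z, i⟩ hp
    simp only [Finset.mem_sigma, mem_filter, mem_univ, true_and] at hp
    simp only [update_idem, update_self, Sigma.mk.inj_iff, heq_eq_eq, and_true]
    funext j
    by_cases h : j = i
    · subst h; simp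
    · simp [update_of_ne h]

end aux4


section aux5
set_option linter.unusedSectionVars false
variable {n : ℕ} {q : Fin n → ℕ} [∀ i, NeZero (q i)]

lemma adj_radial (hq : ∀ i, 2 ≤ q i) (c : ℕ → ℝ) (x : ∀ i, ZMod (q i)) :
    adjOp (fun y => c (mwt y)) x
      = (mwt x : ℝ) * c (mwt x - 1)
        + (∑ i ∈ Finset.univ.filter (fun i => x i ≠ 0), ((q i : ℝ) - 2)) * c (mwt x)
        + (∑ i ∈ Finset.univ.filter (fun i => x i = 0), ((q i : ℝ) - 1)) * c (mwt x + 1) := by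
  rw [adjOp, nbhd_sum]
  rw [← Finset.sum_filter_add_sum_filter_not Finset.univ (fun i => x i ≠ 0)]
  have h1 : ∀ i ∈ Finset.univ.filter (fun i => x i ≠ 0),
      ∑ v ∈ Finset.univ.filter (fun v : ZMod (q i) => v ≠ x i), c (mwt (update x i v))
        = c (mwt x - 1) + ((q i : ℝ) - 2) * c (mwt x) := by
    intro i hi
    exact inner_sum_ne c x i (hq i) (by simpa using hi)
  have h2 : ∀ i ∈ Finset.univ.filter (fun i => ¬ x i ≠ 0),
      ∑ v ∈ Finset.univ.filter (fun v : ZMod (q i) => v ≠ x i), c (mwt (update x i v))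
        = ((q i : ℝ) - 1) * c (mwt x + 1) := by
    intro i hi
    exact inner_sum_zero c x i (not_not.mp (by simpa using (mem_filter.mp hi).2))
  rw [Finset.sum_congr rfl h1, Finset.sum_congr rfl h2, Finset.sum_add_distrib,
    Finset.sum_const]
  have hcard : (Finset.univ.filter (fun i => x i ≠ 0)).card = mwt x := rfl
  have hfilter : Finset.univ.filter (fun i : Fin n => ¬ x i ≠ 0)
      = Finset.univ.filter (fun i : Fin n => x i = 0) := by
    ext i; simp
  rw [hcard, hfilter, nsmul_eq_mul, ← Finset.sum_mul, ← Finset.sum_mul]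

end aux5


section aux6
set_option linter.unusedSectionVars false
variable {n : ℕ} {q : Fin n → ℕ} [∀ i, NeZero (q i)]

lemma eg_identity (hq : ∀ i, 2 ≤ q i) (x : ∀ i, ZMod (q i)) :
    ∑ i ∈ Finset.univ.filter (fun i => x i = 0), ((q i : ℝ) - 1)
      ≤ (∑ i, ((q i : ℝ) - 1)) - (mwt x : ℝ) := by
  have split : ∑ i ∈ Finset.univ.filter (fun i => x i ≠ 0), ((q i : ℝ) - 1)
      + ∑ i ∈ Finset.univ.filter (fun i => ¬ x i ≠ 0), ((q i : ℝ) - 1)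
      = ∑ i, ((q i : ℝ) - 1) :=
    Finset.sum_filter_add_sum_filter_not _ _ _
  have hfilter : Finset.univ.filter (fun i : Fin n => ¬ x i ≠ 0)
      = Finset.univ.filter (fun i : Fin n => x i = 0) := by ext i; simp
  rw [hfilter] at split
  have hlow : (mwt x : ℝ) ≤ ∑ i ∈ Finset.univ.filter (fun i => x i ≠ 0), ((q i : ℝ) - 1) := by
    have : ∀ i ∈ Finset.univ.filter (fun i : Fin n => x i ≠ 0), (1:ℝ) ≤ (q i : ℝ) - 1 := by
      intro i _
      have := hq i
      have : (2:ℝ) ≤ (q i : ℝ) := by exact_mod_cast this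
      linarith
    calc (mwt x : ℝ) = ∑ _i ∈ Finset.univ.filter (fun i : Fin n => x i ≠ 0), (1:ℝ) := by
          rw [Finset.sum_const, nsmul_eq_mul, mul_one]; rfl
      _ ≤ _ := Finset.sum_le_sum this
  linarith

lemma count_le (hq : ∀ i, 2 ≤ q i) (m : ℕ) :
    ((m : ℝ) + 1) * (sph q (m+1) : ℝ)
      ≤ ((∑ i, ((q i : ℝ) - 1)) - (m : ℝ)) * (sph q m : ℝ) := by
  rw [← gcount]
  have : ∀ x ∈ Finset.univ.filter (fun x : ∀ i, ZMod (q i) => mwt x = m),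
      ∑ i ∈ Finset.univ.filter (fun i => x i = 0), ((q i : ℝ) - 1)
        ≤ (∑ i, ((q i : ℝ) - 1)) - (m : ℝ) := by
    intro x hx
    have hm : mwt x = m := (mem_filter.mp hx).2
    have := eg_identity hq x
    rw [hm] at this
    exact this
  calc ∑ x ∈ Finset.univ.filter (fun x : ∀ i, ZMod (q i) => mwt x = m),
        ∑ i ∈ Finset.univ.filter (fun i => x i = 0), ((q i : ℝ) - 1)
      ≤ ∑ _x ∈ Finset.univ.filter (fun x : ∀ i, ZMod (q i) => mwt x = m),
          ((∑ i, ((q i : ℝ) - 1)) - (m : ℝ)) := Finset.sum_le_sum this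
    _ = _ := by
        rw [Finset.sum_const, nsmul_eq_mul, sph_card, mul_comm]

lemma sph_pos (hq : ∀ i, 2 ≤ q i) {k : ℕ} (hk : k ≤ n) : 0 < sph q k := by
  rw [sph_card, Finset.card_pos]
  refine ⟨fun i => if i.val < k then 1 else 0, ?_⟩
  simp only [mem_filter, mem_univ, true_and]
  have hone : ∀ i : Fin n, (1 : ZMod (q i)) ≠ 0 := by
    intro i
    haveI : Fact (1 < q i) := ⟨hq i⟩
    exact one_ne_zero
  have hfe : Finset.univ.filter
      (fun i : Fin n => (if i.val < k then (1 : ZMod (q i)) else 0) ≠ 0)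
      = Finset.univ.filter (fun i : Fin n => i.val < k) := by
    ext i
    by_cases h : i.val < k <;> simp [h, hone i]
  show (Finset.univ.filter _).card = k
  rw [hfe]
  rw [Finset.card_eq_of_bijective (fun j hj => (⟨j, lt_of_lt_of_le hj hk⟩ : Fin n))]
  · intro i hi
    simp only [mem_filter, mem_univ, true_and] at hi
    exact ⟨i.val, hi, rfl⟩
  · intro j hj
    simp [hj]
  · intro j j' hj hj' h
    simpa using congrArg Fin.val h

lemma D_eq (hn : 1 ≤ n) : ∑ i, ((q i : ℝ) - 1) = (n : ℝ) * ((qa q) - 1) := by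
  rw [qa, Finset.sum_sub_distrib, Finset.sum_const, Finset.card_univ, Fintype.card_fin]
  have hne : (n : ℝ) ≠ 0 := by positivity
  field_simp
  simp

end aux6

section aux7
set_option linter.unusedSectionVars false
variable {n : ℕ} {q : Fin n → ℕ} [∀ i, NeZero (q i)]

lemma fiber_sum (φ : (∀ i, ZMod (q i)) → ℝ) :
    ∑ x, φ x = ∑ m ∈ Finset.range (n+1),
      ∑ x ∈ Finset.univ.filter (fun x : ∀ i, ZMod (q i) => mwt x = m), φ x := by
  rw [Finset.sum_fiberwise_of_maps_to (g := mwt)]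
  intro x _
  rw [Finset.mem_range, Nat.lt_succ_iff]
  calc mwt x ≤ (Finset.univ : Finset (Fin n)).card := Finset.card_filter_le _ _
    _ = n := by simp

end aux7

set_option maxHeartbeats 1000000 in
/-- Lower bound on the maximum eigenvalue of the ball `B_r(0)` in the Hamming
graph, for `√n < r ≤ n` and `M = ⌊√n⌋`: there is a nonzero `f` supported in
`B_r(0)` whose Rayleigh quotient is at least
`(1/M) ∑_{k=r-M+2}^{r-1} (k √(s_k/s_{k-1}) + n(q̂_a-1) - k - (k+1) s_{k+1}/s_k
+ (k+1) √(s_{k+1}/s_k))`. -/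
theorem stmt14 (n : ℕ) (hn : 1 ≤ n) (q : Fin n → ℕ) [∀ i, NeZero (q i)]
    (hq : ∀ i, 2 ≤ q i)
    (r : ℕ) (hr1 : Real.sqrt n < r) (hr2 : r ≤ n) :
    ∃ f : (∀ i, ZMod (q i)) → ℝ, f ≠ 0 ∧ (∀ x, f x ≠ 0 → mwt x ≤ r) ∧
      ∑ x : ∀ i, ZMod (q i), adjOp f x * f x
        ≥ ((1 : ℝ) / (Nat.sqrt n : ℝ))
            * (∑ k ∈ Finset.Icc (r - Nat.sqrt n + 2) (r - 1),
                ((k : ℝ) * Real.sqrt ((sph q k : ℝ) / sph q (k - 1))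
                  + (n : ℝ) * (qa q - 1) - (k : ℝ)
                  - ((k : ℝ) + 1) * ((sph q (k + 1) : ℝ) / sph q k)
                  + ((k : ℝ) + 1) * Real.sqrt ((sph q (k + 1) : ℝ) / sph q k)))
            * ∑ x : ∀ i, ZMod (q i), f x ^ 2 := by
  set M := Nat.sqrt n with hM
  set a := r - M + 1 with ha
  -- basic index facts
  have hMle : (M : ℝ) ≤ Real.sqrt n := Real.nat_sqrt_le_real_sqrt
  have hMr : M < r := by exact_mod_cast lt_of_le_of_lt hMle hr1
  have hM1 : 1 ≤ M := Nat.sqrt_pos.mpr hn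
  have ha1 : 1 ≤ a := by omega
  have har : a ≤ r := by omega
  have hcard : (Finset.Icc a r).card = M := by
    rw [Nat.card_Icc]; omega
  -- the radial profile
  set c : ℕ → ℝ := fun k => if k ∈ Finset.Icc a r then (Real.sqrt (sph q k))⁻¹ else 0
    with hcdef
  have hspos : ∀ k ≤ n, (0:ℝ) < (sph q k : ℝ) := by
    intro k hk; exact_mod_cast sph_pos hq hk
  have hcpos : ∀ k, 0 ≤ c k := by
    intro k
    rw [hcdef]
    dsimp only
    split
    · positivity
    · exact le_refl 0
  have hceval : ∀ k ∈ Finset.Icc a r, c k = (Real.sqrt (sph q k))⁻¹ := by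
    intro k hk; rw [hcdef]; exact if_pos hk
  have hczero : ∀ k, k ∉ Finset.Icc a r → c k = 0 := by
    intro k hk; rw [hcdef]; exact if_neg hk
  refine ⟨fun x => c (mwt x), ?_, ?_, ?_⟩
  · -- nonzero
    have hcardpos : 0 < (Finset.univ.filter
        (fun x : ∀ i, ZMod (q i) => mwt x = r)).card := by
      rw [← sph_card]; exact sph_pos hq hr2
    obtain ⟨x₀, hx₀⟩ := Finset.card_pos.mp hcardpos
    have hx₀r : mwt x₀ = r := (Finset.mem_filter.mp hx₀).2
    intro hzero
    have := congrFun hzero x₀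
    rw [hx₀r] at this
    simp only [Pi.zero_apply] at this
    rw [hceval r (by simp [har])] at this
    have : Real.sqrt (sph q r) ≠ 0 :=
      ne_of_gt (Real.sqrt_pos.mpr (hspos r hr2))
    simp_all
  · -- support
    intro x hx
    by_contra hgt
    exact hx (hczero (mwt x) (by simp only [Finset.mem_Icc]; omega))
  -- main inequality
  set D : ℝ := ∑ i, ((q i : ℝ) - 1) with hD
  have hDqa : D = (n : ℝ) * (qa q - 1) := by rw [hD]; exact D_eq hn
  -- pointwise identity
  have esum : ∀ x : ∀ i, ZMod (q i),
      ∑ i ∈ Finset.univ.filter (fun i => x i ≠ 0), ((q i : ℝ) - 2)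
        = D - (mwt x : ℝ)
          - ∑ i ∈ Finset.univ.filter (fun i => x i = 0), ((q i : ℝ) - 1) := by
    intro x
    have split : ∑ i ∈ Finset.univ.filter (fun i => x i ≠ 0), ((q i : ℝ) - 1)
        + ∑ i ∈ Finset.univ.filter (fun i => ¬ x i ≠ 0), ((q i : ℝ) - 1)
        = D := Finset.sum_filter_add_sum_filter_not _ _ _
    have hfil : Finset.univ.filter (fun i : Fin n => ¬ x i ≠ 0)
        = Finset.univ.filter (fun i : Fin n => x i = 0) := by ext i; simp
    rw [hfil] at split
    have h2 : ∑ i ∈ Finset.univ.filter (fun i => x i ≠ 0), ((q i : ℝ) - 2)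
        = (∑ i ∈ Finset.univ.filter (fun i => x i ≠ 0), ((q i : ℝ) - 1))
          - (mwt x : ℝ) := by
      have : ∀ i ∈ Finset.univ.filter (fun i : Fin n => x i ≠ 0),
          ((q i : ℝ) - 2) = ((q i : ℝ) - 1) - 1 := by intro i _; ring
      rw [Finset.sum_congr rfl this, Finset.sum_sub_distrib, Finset.sum_const,
        nsmul_eq_mul, mul_one]
      rfl
    linarith
  have point : ∀ x : ∀ i, ZMod (q i),
      adjOp (fun y => c (mwt y)) x * c (mwt x)
        = ((mwt x : ℝ) * c (mwt x - 1) * c (mwt x)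
            + (D - (mwt x : ℝ)) * c (mwt x) ^ 2)
          + (∑ i ∈ Finset.univ.filter (fun i => x i = 0), ((q i : ℝ) - 1))
            * ((c (mwt x + 1) - c (mwt x)) * c (mwt x)) := by
    intro x
    rw [adj_radial hq, esum x]
    ring
  -- fiberwise computation
  have key : ∑ x : ∀ i, ZMod (q i), adjOp (fun y => c (mwt y)) x * c (mwt x)
      = ∑ m ∈ Finset.range (n+1),
          ((sph q m : ℝ) * ((m : ℝ) * c (m-1) * c m + (D - (m : ℝ)) * c m ^ 2)
            + ((m : ℝ) + 1) * (sph q (m+1) : ℝ) * ((c (m+1) - c m) * c m)) := by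
    rw [Finset.sum_congr rfl (fun x _ => point x), fiber_sum]
    refine Finset.sum_congr rfl (fun m _ => ?_)
    have congr1 : ∀ x ∈ Finset.univ.filter
        (fun x : ∀ i, ZMod (q i) => mwt x = m),
        ((mwt x : ℝ) * c (mwt x - 1) * c (mwt x)
            + (D - (mwt x : ℝ)) * c (mwt x) ^ 2)
          + (∑ i ∈ Finset.univ.filter (fun i => x i = 0), ((q i : ℝ) - 1))
            * ((c (mwt x + 1) - c (mwt x)) * c (mwt x))
        = ((m : ℝ) * c (m - 1) * c m + (D - (m : ℝ)) * c m ^ 2)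
          + (∑ i ∈ Finset.univ.filter (fun i => x i = 0), ((q i : ℝ) - 1))
            * ((c (m + 1) - c m) * c m) := by
      intro x hx
      rw [(Finset.mem_filter.mp hx).2]
    rw [Finset.sum_congr rfl congr1, Finset.sum_add_distrib, Finset.sum_const,
      ← Finset.sum_mul, gcount, nsmul_eq_mul, ← sph_card]
  -- the sum of squares
  have N2 : ∑ x : ∀ i, ZMod (q i), c (mwt x) ^ 2 = (M : ℝ) := by
    rw [fiber_sum]
    have perfiber : ∀ m ∈ Finset.range (n+1),
        ∑ x ∈ Finset.univ.filter (fun x : ∀ i, ZMod (q i) => mwt x = m),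
          c (mwt x) ^ 2 = (sph q m : ℝ) * c m ^ 2 := by
      intro m _
      rw [Finset.sum_congr rfl (fun x hx => by rw [(Finset.mem_filter.mp hx).2]),
        Finset.sum_const, nsmul_eq_mul, ← sph_card]
    rw [Finset.sum_congr rfl perfiber]
    have hsub : ∑ m ∈ Finset.Icc a r, (sph q m : ℝ) * c m ^ 2
        = ∑ m ∈ Finset.range (n+1), (sph q m : ℝ) * c m ^ 2 := by
      refine Finset.sum_subset ?_ (fun m _ hm => by rw [hczero m hm]; ring)
      intro m hm
      rw [Finset.mem_Icc] at hm
      rw [Finset.mem_range]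
      omega
    rw [← hsub]
    · have one : ∀ m ∈ Finset.Icc a r, (sph q m : ℝ) * c m ^ 2 = 1 := by
        intro m hm
        have hmn : m ≤ n := le_trans (Finset.mem_Icc.mp hm).2 hr2
        rw [hceval m hm]
        have hvpos : 0 < Real.sqrt (sph q m) := Real.sqrt_pos.mpr (hspos m hmn)
        rw [inv_pow, Real.sq_sqrt (le_of_lt (hspos m hmn))]
        exact mul_inv_cancel₀ (ne_of_gt (hspos m hmn))
      rw [Finset.sum_congr rfl one, Finset.sum_const, hcard, nsmul_eq_mul, mul_one]
  -- nonnegativity of each ball term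
  have Tnonneg : ∀ m ∈ Finset.Icc a r,
      0 ≤ (sph q m : ℝ) * ((m : ℝ) * c (m-1) * c m + (D - (m : ℝ)) * c m ^ 2)
        + ((m : ℝ) + 1) * (sph q (m+1) : ℝ) * ((c (m+1) - c m) * c m) := by
    intro m hm
    obtain ⟨hma, hmr⟩ := Finset.mem_Icc.mp hm
    have hcl := count_le (q := q) hq m
    rw [← hD] at hcl
    have e1 : 0 ≤ (sph q m : ℝ) * ((m : ℝ) * c (m-1) * c m) :=
      mul_nonneg (Nat.cast_nonneg _)
        (mul_nonneg (mul_nonneg (Nat.cast_nonneg _) (hcpos _)) (hcpos _))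
    have e2 : 0 ≤ ((D - (m : ℝ)) * (sph q m : ℝ)
        - ((m : ℝ) + 1) * (sph q (m+1) : ℝ)) * c m ^ 2 :=
      mul_nonneg (by linarith) (sq_nonneg _)
    have e3 : 0 ≤ ((m : ℝ) + 1) * (sph q (m+1) : ℝ) * (c (m+1) * c m) :=
      mul_nonneg (mul_nonneg (by positivity) (Nat.cast_nonneg _))
        (mul_nonneg (hcpos _) (hcpos _))
    have expand : (sph q m : ℝ) * ((m : ℝ) * c (m-1) * c m + (D - (m : ℝ)) * c m ^ 2)
        + ((m : ℝ) + 1) * (sph q (m+1) : ℝ) * ((c (m+1) - c m) * c m)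
        = (sph q m : ℝ) * ((m : ℝ) * c (m-1) * c m)
          + ((D - (m : ℝ)) * (sph q m : ℝ)
              - ((m : ℝ) + 1) * (sph q (m+1) : ℝ)) * c m ^ 2
          + ((m : ℝ) + 1) * (sph q (m+1) : ℝ) * (c (m+1) * c m) := by ring
    rw [expand]
    exact add_nonneg (add_nonneg e1 e2) e3
  -- exact value of interior terms
  have interior : ∀ k ∈ Finset.Icc (a+1) (r-1),
      (k : ℝ) * Real.sqrt ((sph q k : ℝ) / sph q (k - 1))
        + (n : ℝ) * (qa q - 1) - (k : ℝ)
        - ((k : ℝ) + 1) * ((sph q (k + 1) : ℝ) / sph q k)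
        + ((k : ℝ) + 1) * Real.sqrt ((sph q (k + 1) : ℝ) / sph q k)
      = (sph q k : ℝ) * ((k : ℝ) * c (k-1) * c k + (D - (k : ℝ)) * c k ^ 2)
        + ((k : ℝ) + 1) * (sph q (k+1) : ℝ) * ((c (k+1) - c k) * c k) := by
    intro k hk
    obtain ⟨hk1, hk2⟩ := Finset.mem_Icc.mp hk
    have hmem1 : k - 1 ∈ Finset.Icc a r := Finset.mem_Icc.mpr ⟨by omega, by omega⟩
    have hmem2 : k ∈ Finset.Icc a r := Finset.mem_Icc.mpr ⟨by omega, by omega⟩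
    have hmem3 : k + 1 ∈ Finset.Icc a r := Finset.mem_Icc.mpr ⟨by omega, by omega⟩
    have hs1 := hspos (k-1) (by omega)
    have hs2 := hspos k (by omega)
    have hs3 := hspos (k+1) (by omega)
    rw [hceval _ hmem1, hceval _ hmem2, hceval _ hmem3, ← hDqa,
      Real.sqrt_div (Nat.cast_nonneg _), Real.sqrt_div (Nat.cast_nonneg _)]
    set u := Real.sqrt (sph q (k-1)) with hu
    set v := Real.sqrt (sph q k) with hv
    set w := Real.sqrt (sph q (k+1)) with hw
    have hu0 : 0 < u := Real.sqrt_pos.mpr hs1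
    have hv0 : 0 < v := Real.sqrt_pos.mpr hs2
    have hw0 : 0 < w := Real.sqrt_pos.mpr hs3
    have huu : (sph q (k-1) : ℝ) = u * u := (Real.mul_self_sqrt (le_of_lt hs1)).symm
    have hvv : (sph q k : ℝ) = v * v := (Real.mul_self_sqrt (le_of_lt hs2)).symm
    have hww : (sph q (k+1) : ℝ) = w * w := (Real.mul_self_sqrt (le_of_lt hs3)).symm
    rw [hvv, hww]
    field_simp
    ring
  -- final chain
  beta_reduce
  rw [key, N2]
  have hMne : (M : ℝ) ≠ 0 := by
    have : 0 < M := hM1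
    positivity
  have collapse : ∀ t : ℝ, 1/(M:ℝ) * t * (M:ℝ) = t := fun t => by
    field_simp
  rw [ge_iff_le, collapse]
  have hidx : r - M + 2 = a + 1 := by omega
  rw [hidx]
  have step1 : ∑ k ∈ Finset.Icc (a+1) (r-1),
      ((k : ℝ) * Real.sqrt ((sph q k : ℝ) / sph q (k - 1))
        + (n : ℝ) * (qa q - 1) - (k : ℝ)
        - ((k : ℝ) + 1) * ((sph q (k + 1) : ℝ) / sph q k)
        + ((k : ℝ) + 1) * Real.sqrt ((sph q (k + 1) : ℝ) / sph q k))
      = ∑ k ∈ Finset.Icc (a+1) (r-1),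
        ((sph q k : ℝ) * ((k : ℝ) * c (k-1) * c k + (D - (k : ℝ)) * c k ^ 2)
          + ((k : ℝ) + 1) * (sph q (k+1) : ℝ) * ((c (k+1) - c k) * c k)) :=
    Finset.sum_congr rfl interior
  rw [step1]
  have step2 : ∑ m ∈ Finset.Icc a r,
      ((sph q m : ℝ) * ((m : ℝ) * c (m-1) * c m + (D - (m : ℝ)) * c m ^ 2)
        + ((m : ℝ) + 1) * (sph q (m+1) : ℝ) * ((c (m+1) - c m) * c m))
      = ∑ m ∈ Finset.range (n+1),
        ((sph q m : ℝ) * ((m : ℝ) * c (m-1) * c m + (D - (m : ℝ)) * c m ^ 2)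
          + ((m : ℝ) + 1) * (sph q (m+1) : ℝ) * ((c (m+1) - c m) * c m)) := by
    refine Finset.sum_subset ?_ (fun m _ hm => by rw [hczero m hm]; ring)
    intro m hm
    rw [Finset.mem_Icc] at hm
    rw [Finset.mem_range]
    omega
  rw [← step2]
  refine Finset.sum_le_sum_of_subset_of_nonneg ?_ (fun m hm _ => Tnonneg m hm)
  intro m hm
  rw [Finset.mem_Icc] at hm ⊢
  omega
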